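/- For a positive semidefinite n×n complex matrix x, the Fuglede–Kadison determinant Δ(x) = exp(τ(log x)) (with Δ(x) = 0 if x is singular), where τ is the normalized trace, satisfies Δ(x) = lim_{p→0⁺} (τ(x^p))^{1/p}. -/

import Mathlib

open Matrix Filter Real
open scoped ComplexOrder Topology

/-- For a positive semidefinite `n × n` complex matrix `x`, the
Fuglede–Kadison determinant `Δ(x) = |det x|^{1/n}` (which equals
`exp (τ (log x))` when `x` is positive definite, and `0` when `x` is
singular) is the limit as `p → 0⁺` of `(τ(x^p))^{1/p}`, where
`τ(x^p) = (1/n) ∑ i, (λ_i)^p` is expressed through the eigenvalues of `x`. -/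
theorem fugledeKadison_det_eq_lim_p_norm (n : ℕ) (hn : 0 < n)
    (x : Matrix (Fin n) (Fin n) ℂ) (hx : x.PosSemidef) :
    Filter.Tendsto
      (fun p : ℝ =>
        ((n : ℝ)⁻¹ * ∑ i, (hx.1.eigenvalues i) ^ p) ^ p⁻¹)
      (nhdsWithin 0 (Set.Ioi 0))
      (nhds (‖x.det‖ ^ ((n : ℝ)⁻¹))) := by
  set lam := hx.1.eigenvalues with hlam
  have hnn : ∀ i, 0 ≤ lam i := hx.eigenvalues_nonneg
  have hdet : ‖x.det‖ = ∏ i, lam i := by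
    rw [hx.1.det_eq_prod_eigenvalues, norm_prod]
    exact Finset.prod_congr rfl fun i _ => by
      simp [Complex.norm_real]; exact abs_of_nonneg (hnn i)
  by_cases hpos : ∀ i, 0 < lam i
  · -- positive definite case
    set S : ℝ := ∑ i, Real.log (lam i) with hS
    set G : ℝ → ℝ := fun p => Real.log ((n : ℝ)⁻¹ * ∑ i, Real.exp (p * Real.log (lam i)))
      with hGdef
    have hval : (n : ℝ)⁻¹ * ∑ i : Fin n, Real.exp ((0:ℝ) * Real.log (lam i)) = 1 := by
      simp [Finset.card_fin]
      field_simp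
    have hg : HasDerivAt (fun p : ℝ => (n : ℝ)⁻¹ * ∑ i, Real.exp (p * Real.log (lam i)))
        ((n : ℝ)⁻¹ * S) 0 := by
      have hsum : HasDerivAt (fun p : ℝ => ∑ i, Real.exp (p * Real.log (lam i))) S 0 := by
        have := HasDerivAt.fun_sum (u := Finset.univ)
          (A := fun i p => Real.exp (p * Real.log (lam i)))
          (A' := fun i => Real.log (lam i)) (x := (0:ℝ))
          (fun i _ => by
            have h := ((hasDerivAt_id (0:ℝ)).mul_const (Real.log (lam i))).exp
            simpa using h)
        simpa [hS] using this
      exact hsum.const_mul _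
    have hG : HasDerivAt G ((n : ℝ)⁻¹ * S) 0 := by
      have h1 : (n : ℝ)⁻¹ * ∑ i : Fin n, Real.exp ((0:ℝ) * Real.log (lam i)) ≠ 0 := by
        rw [hval]; norm_num
      have := hg.log h1
      rw [hval] at this
      simpa using this
    have hG0 : G 0 = 0 := by
      simp only [hGdef]
      rw [hval, Real.log_one]
    rw [hasDerivAt_iff_tendsto_slope] at hG
    have hmono : 𝓝[>] (0:ℝ) ≤ 𝓝[≠] (0:ℝ) :=
      nhdsWithin_mono _ (fun y hy => ne_of_gt hy)
    have hG' : Tendsto (fun p => Real.exp (slope G 0 p)) (𝓝[>] (0:ℝ))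
        (𝓝 (Real.exp ((n : ℝ)⁻¹ * S))) :=
      (Real.continuous_exp.continuousAt.tendsto.comp (hG.mono_left hmono))
    have hlim : ‖x.det‖ ^ ((n:ℝ)⁻¹) = Real.exp ((n : ℝ)⁻¹ * S) := by
      rw [hdet, mul_comm, Real.exp_mul, hS, Real.exp_sum]
      congr 1
      exact (Finset.prod_congr rfl fun i _ => (Real.exp_log (hpos i)).symm)
    rw [hlim]
    refine hG'.congr' ?_
    filter_upwards [self_mem_nhdsWithin] with p (hp : 0 < p)
    have hfpos : 0 < (n : ℝ)⁻¹ * ∑ i, lam i ^ p := by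
      apply mul_pos (by positivity)
      have : Nonempty (Fin n) := Fin.pos_iff_nonempty.mp hn
      apply Finset.sum_pos (fun i _ => Real.rpow_pos_of_pos (hpos i) p)
      exact Finset.univ_nonempty
    have hrw : (n : ℝ)⁻¹ * ∑ i, lam i ^ p
        = (n : ℝ)⁻¹ * ∑ i, Real.exp (p * Real.log (lam i)) := by
      congr 1
      exact Finset.sum_congr rfl fun i _ => by
        rw [Real.rpow_def_of_pos (hpos i), mul_comm]
    have key : ((n : ℝ)⁻¹ * ∑ i, lam i ^ p) ^ p⁻¹
        = Real.exp (Real.log ((n : ℝ)⁻¹ * ∑ i, Real.exp (p * Real.log (lam i)))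
            * p⁻¹) := by
      rw [← hrw, Real.rpow_def_of_pos hfpos]
    rw [slope_def_field, hG0, sub_zero, sub_zero, div_eq_mul_inv]
    exact key.symm
  · -- singular case
    push_neg at hpos
    obtain ⟨j, hj⟩ := hpos
    have hj0 : lam j = 0 := le_antisymm hj (hnn j)
    have hdet0 : ‖x.det‖ = 0 := by
      rw [hdet]
      exact Finset.prod_eq_zero (Finset.mem_univ j) hj0
    rw [hdet0, Real.zero_rpow (by positivity)]
    set L : ℝ := (n : ℝ)⁻¹ * ∑ i, (if lam i = 0 then (0:ℝ) else 1) with hLdef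
    have hL0 : 0 ≤ L := by
      apply mul_nonneg (by positivity)
      apply Finset.sum_nonneg
      intro i _; split <;> norm_num
    have hL1 : L < 1 := by
      have hsum : ∑ i, (if lam i = 0 then (0:ℝ) else 1) < n := by
        calc ∑ i, (if lam i = 0 then (0:ℝ) else 1)
            < ∑ _i : Fin n, (1:ℝ) := by
              apply Finset.sum_lt_sum (fun i _ => by split <;> norm_num)
              exact ⟨j, Finset.mem_univ j, by simp [hj0]⟩
          _ = n := by simp
      calc L < (n : ℝ)⁻¹ * n := by
              apply mul_lt_mul_of_pos_left hsum (by positivity)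
        _ = 1 := by field_simp
    have hfL : Tendsto (fun p : ℝ => (n : ℝ)⁻¹ * ∑ i, lam i ^ p) (𝓝[>] (0:ℝ)) (𝓝 L) := by
      apply Tendsto.const_mul
      apply tendsto_finset_sum
      intro i _
      by_cases h0 : lam i = 0
      · simp only [h0, if_pos]
        apply Tendsto.congr' _ tendsto_const_nhds
        filter_upwards [self_mem_nhdsWithin] with p (hp : 0 < p)
        simp [h0, Real.zero_rpow (ne_of_gt hp)]
      · have hpi : 0 < lam i := lt_of_le_of_ne (hnn i) (Ne.symm h0)
        simp only [h0, if_neg, if_false]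
        have : Tendsto (fun p : ℝ => lam i ^ p) (𝓝 0) (𝓝 1) := by
          have hc : Continuous (fun p : ℝ => Real.exp (p * Real.log (lam i))) :=
            Real.continuous_exp.comp (continuous_id.mul continuous_const)
          have := hc.tendsto 0
          simp only [zero_mul, Real.exp_zero] at this
          refine this.congr fun p => by rw [Real.rpow_def_of_pos hpi, mul_comm]
        exact this.mono_left nhdsWithin_le_nhds
    set c : ℝ := (L + 1) / 2 with hcdef
    have hcL : L < c := by rw [hcdef]; linarith
    have hc1 : c < 1 := by rw [hcdef]; linarith
    have hc0 : 0 < c := by rw [hcdef]; linarith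
    have hfc : ∀ᶠ p in 𝓝[>] (0:ℝ), (n : ℝ)⁻¹ * ∑ i, lam i ^ p < c :=
      hfL.eventually_lt_const hcL
    have hcp : Tendsto (fun p : ℝ => c ^ p⁻¹) (𝓝[>] (0:ℝ)) (𝓝 0) := by
      have hbase : Tendsto (fun q : ℝ => c ^ q) atTop (𝓝 0) :=
        tendsto_rpow_atTop_of_base_lt_one c (by linarith) hc1
      exact hbase.comp tendsto_inv_nhdsGT_zero
    apply squeeze_zero' ?_ ?_ hcp
    · filter_upwards with p
      apply Real.rpow_nonneg
      apply mul_nonneg (by positivity)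
      exact Finset.sum_nonneg fun i _ => Real.rpow_nonneg (hnn i) p
    · filter_upwards [hfc, self_mem_nhdsWithin] with p hpc (hp : 0 < p)
      apply Real.rpow_le_rpow
      · apply mul_nonneg (by positivity)
        exact Finset.sum_nonneg fun i _ => Real.rpow_nonneg (hnn i) p
      · exact le_of_lt hpc
      · positivity
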